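/- Let K be a complete discretely valued field (of characteristic 0 or p) with perfect residue field of characteristic p, and let L/K be a finite, totally ramified, Galois extension of degree p^n. Let π_L be a uniformizer of L with minimal polynomial p(x) over K, and set d = v_L(p'(π_L)). If ρ ∈ L satisfies v_L(ρ) ≡ −d − 1 (mod p^n), then Tr_{L/K}(ρ) ≠ 0. -/

import Mathlib

/-- A normalized discrete valuation on a field `F` : an integer-valued function
(its value at `0` is irrelevant), additive on products of nonzero elements,
satisfying the ultrametric inequality, and attaining the value `1`
(so `v (Fˣ) = ℤ`, i.e. it is normalized). -/
structure NormDiscVal (F : Type*) [Field F] where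
  v : F → ℤ
  v_mul : ∀ x y : F, x ≠ 0 → y ≠ 0 → v (x * y) = v x + v y
  v_add : ∀ x y : F, x ≠ 0 → y ≠ 0 → x + y ≠ 0 → min (v x) (v y) ≤ v (x + y)
  exists_uniformizer : ∃ π : F, π ≠ 0 ∧ v π = 1

namespace NormDiscVal

variable {F : Type*} [Field F]

/-- `x` belongs to the fractional ideal `𝔓^j = {x | v x ≥ j}` (and `0` belongs to all). -/
def memP (w : NormDiscVal F) (j : ℤ) (x : F) : Prop := x = 0 ∨ j ≤ w.v x

/-- `F` is complete with respect to the valuation `w` :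
every Cauchy sequence (for the valuation) has a limit. -/
def IsComplete (w : NormDiscVal F) : Prop :=
  ∀ a : ℕ → F,
    (∀ N : ℤ, ∃ M : ℕ, ∀ m k : ℕ, M ≤ m → M ≤ k → w.memP N (a m - a k)) →
    ∃ l : F, ∀ N : ℤ, ∃ M : ℕ, ∀ m : ℕ, M ≤ m → w.memP N (a m - l)

/-- The residue field of `w` has characteristic `p` and is perfect :
`p` vanishes in the residue field and the Frobenius is surjective on it. -/
def PerfectResidueCharP (w : NormDiscVal F) (p : ℕ) : Prop :=
  w.memP 1 (p : F) ∧
    ∀ x : F, w.memP 0 x → ∃ y : F, w.memP 0 y ∧ w.memP 1 (x - y ^ p)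

end NormDiscVal

section Aux

variable {F : Type*} [Field F] (w : NormDiscVal F)

lemma NormDiscVal.v_one' : w.v 1 = 0 := by
  have h := w.v_mul 1 1 one_ne_zero one_ne_zero
  rw [one_mul] at h; omega

lemma NormDiscVal.v_neg' (x : F) (hx : x ≠ 0) : w.v (-x) = w.v x := by
  have h1 := w.v_mul (-1) (-1) (by norm_num) (by norm_num)
  rw [neg_mul_neg, one_mul, w.v_one'] at h1
  have h2 := w.v_mul (-1) x (by norm_num) hx
  rw [neg_one_mul] at h2
  omega

lemma NormDiscVal.add_ne_zero' {x y : F} (hx : x ≠ 0) (hy : y ≠ 0)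
    (h : w.v x ≠ w.v y) : x + y ≠ 0 := by
  intro hxy
  have hyx : y = -x := by linear_combination hxy
  rw [hyx, w.v_neg' x hx] at h
  exact h rfl

lemma NormDiscVal.v_add_eq_min' {x y : F} (hx : x ≠ 0) (hy : y ≠ 0)
    (h : w.v x ≠ w.v y) : w.v (x + y) = min (w.v x) (w.v y) := by
  have hxy := w.add_ne_zero' hx hy h
  have h1 := w.v_add x y hx hy hxy
  rcases lt_or_gt_of_ne h with hlt | hlt
  · have h2 := w.v_add (x + y) (-y) hxy (neg_ne_zero.2 hy)
      (by rw [add_neg_cancel_right]; exact hx)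
    rw [add_neg_cancel_right, w.v_neg' y hy] at h2
    rw [min_eq_left hlt.le] at h1 ⊢
    rcases min_le_iff.mp h2 with h3 | h3 <;> omega
  · have h2 := w.v_add (-x) (x + y) (neg_ne_zero.2 hx) hxy
      (by rw [neg_add_cancel_left]; exact hy)
    rw [neg_add_cancel_left, w.v_neg' x hx] at h2
    rw [min_eq_right hlt.le] at h1 ⊢
    rcases min_le_iff.mp h2 with h3 | h3 <;> omega

/-- A sum of nonzero elements with pairwise distinct valuations is nonzero, and its
valuation is the valuation of one of the terms. -/
lemma NormDiscVal.v_sum' {ι : Type*} (s : Finset ι) (f : ι → F) (hne : s.Nonempty)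
    (h0 : ∀ i ∈ s, f i ≠ 0)
    (hinj : ∀ i ∈ s, ∀ j ∈ s, w.v (f i) = w.v (f j) → i = j) :
    (∑ i ∈ s, f i) ≠ 0 ∧ ∃ i ∈ s, w.v (∑ i ∈ s, f i) = w.v (f i) := by
  classical
  induction s using Finset.cons_induction with
  | empty => exact absurd hne (by simp)
  | cons a t ha ih =>
    rw [Finset.sum_cons]
    have hfa : f a ≠ 0 := h0 a (Finset.mem_cons_self a t)
    by_cases ht : t.Nonempty
    · obtain ⟨hne0, i, hi, hv⟩ := ih ht
        (fun i hi => h0 i (Finset.mem_cons_of_mem hi))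
        (fun i hi j hj hij => hinj i (Finset.mem_cons_of_mem hi) j
          (Finset.mem_cons_of_mem hj) hij)
      have hvne : w.v (f a) ≠ w.v (∑ i ∈ t, f i) := by
        rw [hv]
        intro hEq
        have hai := hinj a (Finset.mem_cons_self a t) i (Finset.mem_cons_of_mem hi) hEq
        exact ha (hai ▸ hi)
      refine ⟨w.add_ne_zero' hfa hne0 hvne, ?_⟩
      rw [w.v_add_eq_min' hfa hne0 hvne]
      rcases min_cases (w.v (f a)) (w.v (∑ i ∈ t, f i)) with ⟨hmin, _⟩ | ⟨hmin, _⟩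
      · exact ⟨a, Finset.mem_cons_self a t, hmin⟩
      · exact ⟨i, Finset.mem_cons_of_mem hi, by rw [hmin, hv]⟩
    · rw [Finset.not_nonempty_iff_eq_empty] at ht
      subst ht
      rw [Finset.sum_empty, add_zero]
      exact ⟨hfa, a, Finset.mem_cons_self a ∅, rfl⟩

lemma aux_int_dvd_eq {m a b : ℤ} (hm : 0 < m) (h : m ∣ a - b)
    (ha : 0 ≤ a) (ha' : a < m) (hb : 0 ≤ b) (hb' : b < m) : a = b := by
  obtain ⟨c, hc⟩ := h
  rcases lt_trichotomy c 0 with hcs | hcs | hcs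
  · nlinarith [mul_le_mul_of_nonneg_left (by omega : c ≤ -1) hm.le]
  · rw [hcs, mul_zero] at hc; omega
  · nlinarith [mul_le_mul_of_nonneg_left (by omega : (1:ℤ) ≤ c) hm.le]

end Aux

open Polynomial

/-- **Nonvanishing of the trace at the critical valuation.**  Let `K` be a
complete discretely valued field (characteristic `0` or `p`) with perfect
residue field of characteristic `p`, and `L/K` a finite, totally ramified,
Galois extension of degree `p ^ n`.  With `d = v_L(p'(πL))`, every `ρ ∈ L`
with `v_L(ρ) ≡ −d − 1 (mod p ^ n)` has `Tr_{L/K}(ρ) ≠ 0`. -/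
theorem trace_ne_zero_of_critical_valuation
    {p : ℕ} (hp : p.Prime) {K L : Type*} [Field K] [Field L] [Algebra K L]
    (hchar : ringChar K = 0 ∨ ringChar K = p)
    (vK : NormDiscVal K) (hKcompl : vK.IsComplete)
    (hKres : vK.PerfectResidueCharP p)
    [FiniteDimensional K L] [IsGalois K L]
    (n : ℕ) (hdeg : Module.finrank K L = p ^ n)
    (vL : NormDiscVal L)
    (htotram : ∀ x : K, x ≠ 0 → vL.v (algebraMap K L x) = (p ^ n : ℤ) * vK.v x)
    (πL : L) (hπL : πL ≠ 0 ∧ vL.v πL = 1)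
    (d : ℤ) (hd : d = vL.v (aeval πL (derivative (minpoly K πL))))
    (ρ : L) (hρ : ρ ≠ 0)
    (hval : Int.ModEq ((p : ℤ) ^ n) (vL.v ρ) (-d - 1)) :
    Algebra.trace K L ρ ≠ 0 := by
  classical
  have hsep : Algebra.IsSeparable K L := IsGalois.to_isSeparable
  obtain ⟨hπ0, hπv⟩ := hπL
  set m : ℕ := p ^ n with hm
  have hm0 : 0 < m := pow_pos hp.pos n
  have hmcast : ((p : ℤ) ^ n) = (m : ℤ) := by push_cast [hm]; ring
  -- valuation of powers of the uniformizer
  have hπpow : ∀ k : ℕ, vL.v (πL ^ k) = (k : ℤ) := by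
    intro k
    induction k with
    | zero => simpa using vL.v_one'
    | succ k ih =>
      rw [pow_succ, vL.v_mul _ _ (pow_ne_zero _ hπ0) hπ0, ih, hπv]
      push_cast; ring
  -- the valuation of `c • πL ^ i` for nonzero `c : K`
  have hvterm : ∀ (c : K), c ≠ 0 → ∀ i : ℕ,
      vL.v (c • πL ^ i) = (m : ℤ) * vK.v c + (i : ℤ) := by
    intro c hc i
    have hcL : algebraMap K L c ≠ 0 := fun h => hc ((_root_.map_eq_zero (algebraMap K L)).mp h)
    rw [Algebra.smul_def, vL.v_mul _ _ hcL (pow_ne_zero _ hπ0), htotram c hc, hπpow, hmcast]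
  have hterm_ne : ∀ (c : K), c ≠ 0 → ∀ i : ℕ, c • πL ^ i ≠ 0 := fun c hc i =>
    smul_ne_zero hc (pow_ne_zero _ hπ0)
  -- linear independence of the powers of `πL`
  have hli : LinearIndependent K (fun i : Fin m => πL ^ (i : ℕ)) := by
    rw [linearIndependent_iff']
    intro s g hsum i hi
    by_contra hgi
    set s' : Finset (Fin m) := s.filter (fun j => g j ≠ 0) with hs'
    have hne : s'.Nonempty := ⟨i, Finset.mem_filter.2 ⟨hi, hgi⟩⟩
    have hsum' : ∑ j ∈ s', g j • πL ^ (j : ℕ) = 0 := by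
      rw [hs', Finset.sum_filter_of_ne (fun j _ h => by
        intro hg; exact h (by rw [hg, zero_smul]))]
      exact hsum
    have key := vL.v_sum' s' (fun j => g j • πL ^ (j : ℕ)) hne
      (fun j hj => hterm_ne _ (Finset.mem_filter.mp hj).2 _)
      (fun j hj k hk hjk => by
        have hgj := (Finset.mem_filter.mp hj).2
        have hgk := (Finset.mem_filter.mp hk).2
        rw [hvterm _ hgj, hvterm _ hgk] at hjk
        have : ((j : ℕ) : ℤ) = ((k : ℕ) : ℤ) := by
          refine aux_int_dvd_eq (m := (m : ℤ)) (by exact_mod_cast hm0)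
            ⟨vK.v (g k) - vK.v (g j), by linear_combination hjk⟩
            (by positivity) (by exact_mod_cast j.2) (by positivity) (by exact_mod_cast k.2)
        exact Fin.ext (by exact_mod_cast this))
    exact key.1 hsum'
  haveI : Nonempty (Fin m) := ⟨⟨0, hm0⟩⟩
  have hcard : Fintype.card (Fin m) = Module.finrank K L := by simp [hdeg, hm]
  let b : Module.Basis (Fin m) K L := basisOfLinearIndependentOfCardEqFinrank hli hcard
  have hb : ∀ i : Fin m, b i = πL ^ (i : ℕ) := fun i => by
    simp [b, coe_basisOfLinearIndependentOfCardEqFinrank]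
  let pb : PowerBasis K L := ⟨πL, m, b, hb⟩
  set Dπ : L := aeval πL (derivative (minpoly K πL)) with hDπ
  have hD : Dπ ≠ 0 :=
    (Algebra.IsSeparable.isSeparable K πL).aeval_derivative_ne_zero (minpoly.aeval K πL)
  set iLast : Fin m := ⟨m - 1, by omega⟩ with hiLast
  -- Euler's formulas via the dual basis of the trace form
  have hmon : (minpolyDiv K πL).Monic :=
    minpolyDiv_monic (IsIntegral.of_finite K πL)
  have hdegdiv : (minpolyDiv K πL).natDegree = m - 1 := by
    have h : (minpoly K πL).natDegree = m := pb.natDegree_minpoly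
    rw [natDegree_minpolyDiv, h]
  have hdual : (Algebra.traceForm K L).dualBasis (traceForm_nondegenerate K L)
      pb.basis iLast = Dπ⁻¹ := by
    rw [← Module.Basis.traceDual_def, Module.Basis.traceDual_powerBasis_eq pb iLast]
    show (minpolyDiv K πL).coeff (m - 1) / Dπ = Dπ⁻¹
    rw [← hdegdiv, hmon.coeff_natDegree, one_div]
  have hEuler : ∀ j : Fin m, Algebra.trace K L (πL ^ (j : ℕ) * Dπ⁻¹) =
      if j = iLast then 1 else 0 := by
    intro j
    have h := (Algebra.traceForm K L).apply_dualBasis_left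
      (traceForm_nondegenerate K L) pb.basis iLast j
    rw [hdual] at h
    have hbj : pb.basis j = πL ^ (j : ℕ) := hb j
    rw [hbj, Algebra.traceForm_apply, mul_comm] at h
    exact h
  -- expand `ρ * Dπ` in the power basis
  set c : Fin m →₀ K := b.repr (ρ * Dπ) with hc
  have hrepr : ∑ i : Fin m, c i • πL ^ (i : ℕ) = ρ * Dπ := by
    conv_rhs => rw [← b.sum_repr (ρ * Dπ)]
    exact Finset.sum_congr rfl fun i _ => by rw [hb]
  have hρeq : ρ = ∑ i : Fin m, c i • (πL ^ (i : ℕ) * Dπ⁻¹) := by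
    have : ρ = (ρ * Dπ) * Dπ⁻¹ := by field_simp
    rw [this, ← hrepr, Finset.sum_mul]
    exact Finset.sum_congr rfl fun i _ => (smul_mul_assoc _ _ _)
  have htr : Algebra.trace K L ρ = c iLast := by
    rw [hρeq, map_sum]
    rw [Finset.sum_congr rfl fun i _ => by rw [map_smul, hEuler i]]
    simp [Finset.sum_ite_eq']
  -- the top coefficient is nonzero
  have hρD : ρ * Dπ ≠ 0 := mul_ne_zero hρ hD
  have hcne : c ≠ 0 := by
    intro h
    apply hρD
    rw [← hrepr, h]
    simp
  have hsupp : c.support.Nonempty := Finsupp.support_nonempty_iff.mpr hcne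
  have hsum_s : ∑ i ∈ c.support, c i • πL ^ (i : ℕ) = ρ * Dπ := by
    rw [← hrepr]
    exact Finset.sum_subset (Finset.subset_univ _)
      (fun i _ hi => by rw [Finsupp.notMem_support_iff.mp hi, zero_smul])
  have key := vL.v_sum' c.support (fun i => c i • πL ^ (i : ℕ)) hsupp
    (fun i hi => hterm_ne _ (Finsupp.mem_support_iff.mp hi) _)
    (fun i hi j hj hij => by
      have hgi := Finsupp.mem_support_iff.mp hi
      have hgj := Finsupp.mem_support_iff.mp hj
      rw [hvterm _ hgi, hvterm _ hgj] at hij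
      have : ((i : ℕ) : ℤ) = ((j : ℕ) : ℤ) := by
        refine aux_int_dvd_eq (m := (m : ℤ)) (by exact_mod_cast hm0)
          ⟨vK.v (c j) - vK.v (c i), by linear_combination hij⟩
          (by positivity) (by exact_mod_cast i.2) (by positivity) (by exact_mod_cast j.2)
      exact Fin.ext (by exact_mod_cast this))
  obtain ⟨-, i₀, hi₀, hv₀⟩ := key
  rw [hsum_s] at hv₀
  have hvmul : vL.v (ρ * Dπ) = vL.v ρ + d := by
    rw [vL.v_mul ρ Dπ hρ hD, hd, hDπ]
  rw [hvmul, hvterm _ (Finsupp.mem_support_iff.mp hi₀)] at hv₀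
  -- from the congruence, `i₀ = iLast`
  have hdvd : (m : ℤ) ∣ (vL.v ρ + d + 1) := by
    have h1 : ((p : ℤ) ^ n) ∣ (-d - 1) - vL.v ρ := hval.dvd
    rw [hmcast] at h1
    obtain ⟨k, hk⟩ := h1
    exact ⟨-k, by linear_combination -hk⟩
  have hdvd2 : (m : ℤ) ∣ ((i₀ : ℕ) : ℤ) + 1 := by
    obtain ⟨k, hk⟩ := hdvd
    exact ⟨k - vK.v (c i₀), by linear_combination hk - hv₀⟩
  have hi₀eq : i₀ = iLast := by
    have hle : (m : ℤ) ≤ ((i₀ : ℕ) : ℤ) + 1 :=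
      Int.le_of_dvd (by positivity) hdvd2
    have hlt : ((i₀ : ℕ) : ℤ) < (m : ℤ) := by exact_mod_cast i₀.2
    apply Fin.ext
    show (i₀ : ℕ) = m - 1
    omega
  rw [htr]
  rw [hi₀eq] at hi₀
  exact Finsupp.mem_support_iff.mp hi₀
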